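/- Let r ≥ 3 and suppose F₁, F₂ ∈ ℚ[t_0,…,t_{r−2}] both satisfy: (i) quasi-homogeneity: every monomial Π_α t_α^{n_α} occurring satisfies Σ_{α=0}^{r−2} (r−α)·n_α = 2r+2; (ii) the WDVV equations; (iii) ∂³F/∂t_α∂t_β∂t_γ evaluated at t = 0 equals δ_{α+β+γ, r−2} for all 0 ≤ α, β, γ ≤ r−2; (iv) ∂⁴F/∂t_{r−2}∂t_{r−2}∂t_1∂t_1 evaluated at t = 0 equals 1/r. Then F₁ = F₂; i.e., a polynomial satisfying the homogeneity condition, the WDVV equations and the initial conditions of the genus-0 r-spin theory is unique. -/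

import Mathlib

open scoped BigOperators
open MvPolynomial


theorem rsu_pop {σ : Type*} [Fintype σ] [DecidableEq σ] (t : σ →₀ ℕ) (i : σ)
    (h : t i ≠ 0) : t = (t - Finsupp.single i 1) + Finsupp.single i 1 := by
  ext j
  simp only [Finsupp.add_apply, Finsupp.coe_tsub, Pi.sub_apply, Finsupp.single_apply]
  by_cases hij : i = j
  · subst hij; simp; omega
  · simp [hij]

theorem coeff_pderiv' {σ : Type*} [DecidableEq σ] (i : σ) (f : MvPolynomial σ ℚ)
    (m : σ →₀ ℕ) :
    coeff m (pderiv i f) = (m i + 1 : ℚ) * coeff (m + Finsupp.single i 1) f := by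
  induction f using MvPolynomial.induction_on' with
  | monomial s a =>
    rw [pderiv_monomial, coeff_monomial, coeff_monomial]
    have key : ∀ j, ((m + Finsupp.single i 1 : σ →₀ ℕ) j) = m j + (if i = j then 1 else 0) := by
      intro j; simp [Finsupp.add_apply, Finsupp.single_apply]
    split_ifs with h1 h2 h2
    · subst h2
      have h3 : ((m + Finsupp.single i 1 : σ →₀ ℕ) i : ℕ) = m i + 1 := by simp [key]
      rw [h3]; push_cast; ring
    · have hsi : s i = 0 := by
        by_contra hne
        apply h2
        ext j
        have hj := congrFun (congrArg (fun (f : σ →₀ ℕ) => (f : σ → ℕ)) h1) j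
        simp only [Finsupp.coe_tsub, Pi.sub_apply] at hj
        have hsj : (Finsupp.single i 1 : σ →₀ ℕ) j = if i = j then 1 else 0 :=
          Finsupp.single_apply
        rw [key j]
        by_cases hij : i = j
        · subst hij; rw [hsj] at hj; simp at hj ⊢; omega
        · rw [hsj] at hj; simp [hij] at hj ⊢; omega
      simp [hsi]
    · exfalso; apply h1; subst h2
      ext j
      have hsj : (Finsupp.single i 1 : σ →₀ ℕ) j = if i = j then 1 else 0 :=
        Finsupp.single_apply
      simp only [Finsupp.coe_tsub, Pi.sub_apply]
      rw [key j, hsj]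
      by_cases hij : i = j <;> simp [hij]
    · simp
  | add p q hp hq => simp [hp, hq, mul_add]

section
variable {σ : Type*} [Fintype σ] [DecidableEq σ]

noncomputable def rsuN (m : σ →₀ ℕ) : ℚ := ∏ j, ((m j).factorial : ℚ)

theorem rsuN_ne_zero (m : σ →₀ ℕ) : rsuN m ≠ 0 := by
  apply Finset.prod_ne_zero_iff.mpr
  intro j _
  exact_mod_cast (Nat.factorial_pos (m j)).ne'

theorem rsuN_zero : rsuN (0 : σ →₀ ℕ) = 1 := by simp [rsuN]

theorem rsuN_add_single (m : σ →₀ ℕ) (i : σ) :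
    rsuN (m + Finsupp.single i 1) = rsuN m * ((m i : ℚ) + 1) := by
  unfold rsuN
  have step : ∀ j, (((m + Finsupp.single i 1 : σ →₀ ℕ) j).factorial : ℚ)
      = ((m j).factorial : ℚ) * (if j = i then (m i : ℚ) + 1 else 1) := by
    intro j
    by_cases hij : j = i
    · subst hij
      have : ((m + Finsupp.single j 1 : σ →₀ ℕ) j) = m j + 1 := by
        simp [Finsupp.add_apply]
      rw [this, if_pos rfl, Nat.factorial_succ]
      push_cast; ring
    · have : ((m + Finsupp.single i 1 : σ →₀ ℕ) j) = m j := by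
        simp [Finsupp.add_apply, Finsupp.single_apply, Ne.symm hij]
      rw [this, if_neg hij, mul_one]
  calc ∏ j, (((m + Finsupp.single i 1 : σ →₀ ℕ) j).factorial : ℚ)
      = ∏ j, ((m j).factorial : ℚ) * (if j = i then (m i : ℚ) + 1 else 1) := by
        exact Finset.prod_congr rfl fun j _ => step j
    _ = (∏ j, ((m j).factorial : ℚ)) * ∏ j, (if j = i then (m i : ℚ) + 1 else 1) := by
        rw [Finset.prod_mul_distrib]
    _ = (∏ j, ((m j).factorial : ℚ)) * ((m i : ℚ) + 1) := by
        rw [Finset.prod_ite_eq' Finset.univ i (fun _ => (m i : ℚ) + 1)]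
        simp

theorem rsu_Nstep (i : σ) (f : MvPolynomial σ ℚ) (m : σ →₀ ℕ) :
    rsuN m * coeff m (pderiv i f)
      = rsuN (m + Finsupp.single i 1) * coeff (m + Finsupp.single i 1) f := by
  rw [coeff_pderiv', rsuN_add_single]
  ring
end

section
variable {σ : Type*} [Fintype σ] [DecidableEq σ]

theorem rsu_wsum_add (w : σ → ℕ) (a b : σ →₀ ℕ) :
    ∑ j, w j * (a + b) j = (∑ j, w j * a j) + ∑ j, w j * b j := by
  rw [← Finset.sum_add_distrib]
  exact Finset.sum_congr rfl fun j _ => by simp [Finsupp.add_apply, Nat.mul_add]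

theorem rsu_wsum_single (w : σ → ℕ) (i : σ) (c : ℕ) :
    ∑ j, w j * (Finsupp.single i c : σ →₀ ℕ) j = w i * c := by
  rw [Finset.sum_eq_single i]
  · simp
  · intro j _ hj; simp [Finsupp.single_apply, Ne.symm hj]
  · simp

theorem rsu_sum_add (a b : σ →₀ ℕ) :
    ∑ j, (a + b) j = (∑ j, a j) + ∑ j, b j := by
  simpa using rsu_wsum_add (fun _ => 1) a b

theorem rsu_sum_single (i : σ) (c : ℕ) :
    ∑ j, (Finsupp.single i c : σ →₀ ℕ) j = c := by
  simpa using rsu_wsum_single (fun _ => 1) i c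

theorem rsu_popMax (t : σ →₀ ℕ) (M : σ → ℕ) (h : (∑ j, t j) ≠ 0) :
    ∃ i : σ, ∃ t' : σ →₀ ℕ, t = t' + Finsupp.single i 1 ∧
      (∀ j, t j ≠ 0 → M j ≤ M i) := by
  have hne : t.support.Nonempty := by
    by_contra hc
    rw [Finset.not_nonempty_iff_eq_empty] at hc
    apply h
    apply Finset.sum_eq_zero
    intro j _
    by_contra hj
    have : j ∈ t.support := Finsupp.mem_support_iff.mpr hj
    rw [hc] at this
    exact absurd this (Finset.notMem_empty j)
  obtain ⟨i, hmem, hmax⟩ := t.support.exists_max_image M hne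
  refine ⟨i, t - Finsupp.single i 1, ?_, ?_⟩
  · have hti : t i ≠ 0 := Finsupp.mem_support_iff.mp hmem
    ext j
    simp only [Finsupp.add_apply, Finsupp.coe_tsub, Pi.sub_apply, Finsupp.single_apply]
    by_cases hij : i = j
    · subst hij; simp; omega
    · simp [hij]
  · intro j hj
    exact hmax j (Finsupp.mem_support_iff.mpr hj)

theorem rsu_wsum_le (w : σ → ℕ) (t : σ →₀ ℕ) (M : ℕ) (h : ∀ j, t j ≠ 0 → w j ≤ M) :
    ∑ j, w j * t j ≤ M * ∑ j, t j := by
  rw [Finset.mul_sum]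
  apply Finset.sum_le_sum
  intro j _
  by_cases hj : t j = 0
  · simp [hj]
  · exact Nat.mul_le_mul_right _ (h j hj)

theorem rsu_wsum_ge (w : σ → ℕ) (t : σ →₀ ℕ) (h : ∀ j, t j ≠ 0 → 1 ≤ w j) :
    (∑ j, t j) ≤ ∑ j, w j * t j := by
  apply Finset.sum_le_sum
  intro j _
  by_cases hj : t j = 0
  · simp [hj]
  · calc t j = 1 * t j := (one_mul _).symm
      _ ≤ w j * t j := Nat.mul_le_mul_right _ (h j hj)

theorem rsu_eq_zero (t : σ →₀ ℕ) (h : (∑ j, t j) = 0) : t = 0 := by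
  ext j
  have := Finset.sum_eq_zero_iff.mp h j (Finset.mem_univ j)
  simpa using this

end

noncomputable def rsuMer (r : ℕ) (g : (Fin (r-1) →₀ ℕ) → ℚ) (m : Fin (r-1) →₀ ℕ)
    (x y : Fin (r-1)) (c : ℕ) : ℚ :=
  if h : c < r - 1 then
    g (m + Finsupp.single x 1 + Finsupp.single y 1 + Finsupp.single ⟨c, h⟩ 1)
  else 0

theorem rsu_arithA (r n a b wt : ℕ) (hr : 3 ≤ r) (hn : 4 ≤ n)
    (hhom : wt + (2*r+2) = r*n) (hba : b ≤ a)
    (hbound : wt ≤ a + (n-2) * b) (hcon : a + b ≤ r - 2) : False := by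
  obtain ⟨r', rfl⟩ : ∃ r', r = r' + 3 := ⟨r - 3, by omega⟩
  obtain ⟨n', rfl⟩ : ∃ n', n = n' + 4 := ⟨n - 4, by omega⟩
  have hcon' : a + b ≤ r' + 1 := by omega
  have hb2 : 2 * b ≤ r' + 1 := by omega
  have hw : wt = r'*n' + 2*r' + 3*n' + 4 := by
    have : (r'+3)*(n'+4) = r'*n' + 4*r' + 3*n' + 12 := by ring
    omega
  have hsub : n' + 4 - 2 = n' + 2 := by omega
  rw [hsub] at hbound
  nlinarith [Nat.mul_le_mul_left (n'+1) hb2]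

theorem rsu_arithB (r n a b wt : ℕ) (hr : 3 ≤ r) (hn : 4 ≤ n)
    (hhom : wt + (2*r+2) = r*n) (hba : b ≤ a)
    (hbound : wt ≤ a + (n-1) * b) (hcon : a + b ≤ r - 2) : False := by
  obtain ⟨r', rfl⟩ : ∃ r', r = r' + 3 := ⟨r - 3, by omega⟩
  obtain ⟨n', rfl⟩ : ∃ n', n = n' + 4 := ⟨n - 4, by omega⟩
  have hcon' : a + b ≤ r' + 1 := by omega
  have hb2 : 2 * b ≤ r' + 1 := by omega
  have hw : wt = r'*n' + 2*r' + 3*n' + 4 := by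
    have : (r'+3)*(n'+4) = r'*n' + 4*r' + 3*n' + 12 := by ring
    omega
  have hsub : n' + 4 - 1 = n' + 3 := by omega
  rw [hsub] at hbound
  nlinarith [Nat.mul_le_mul_left (n'+2) hb2]

theorem rsu_arithC (r n a b : ℕ) (hr : 3 ≤ r) (hn : 4 ≤ n)
    (ha : a ≤ r-2) (hb : b ≤ r-2)
    (heq : a + b + 1 + (n-3) + (2*r+2) = r*n) : n = 4 ∧ a = r-2 ∧ b = r-2 := by
  obtain ⟨r', rfl⟩ : ∃ r', r = r' + 3 := ⟨r - 3, by omega⟩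
  obtain ⟨n', rfl⟩ : ∃ n', n = n' + 4 := ⟨n - 4, by omega⟩
  have hex : (r'+3)*(n'+4) = r'*n' + 4*r' + 3*n' + 12 := by ring
  have ha' : a ≤ r' + 1 := by omega
  have hb' : b ≤ r' + 1 := by omega
  have hab : a + b = r'*n' + 2*r' + 2*n' + 2 := by omega
  have hn0 : n' = 0 := by nlinarith
  subst hn0
  refine ⟨by omega, by omega, by omega⟩

theorem rsu_arithD (j k : ℕ) (h2 : 2 ≤ k) (hkj : k ≤ j) :
    j*j + k*k < 1 + (k-1+j)*(k-1+j) := by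
  obtain ⟨b, rfl⟩ : ∃ b, k = b + 1 := ⟨k - 1, by omega⟩
  have hsub : b + 1 - 1 = b := by omega
  rw [hsub]
  have hb : 1 ≤ b := by omega
  have hj : 2 ≤ j := by omega
  nlinarith [Nat.mul_le_mul_left b hj]

theorem rsu_arithE (i k : ℕ) (h2 : 2 ≤ k) (hki : k ≤ i) :
    i*i + k*k < (k-1)*(k-1) + (1+i)*(1+i) := by
  obtain ⟨b, rfl⟩ : ∃ b, k = b + 1 := ⟨k - 1, by omega⟩
  have hsub : b + 1 - 1 = b := by omega
  rw [hsub]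
  nlinarith

set_option maxHeartbeats 1000000 in
theorem rsu_collapse (r : ℕ) (hr : 3 ≤ r) (u v : Fin (r-1) → ℚ) (c₁ c₂ d₁ d₂ : ℕ) :
    (∑ μ : Fin (r-1), ∑ ν : Fin (r-1),
      if (μ:ℕ) + (ν:ℕ) = r - 2 then
        u μ * (if (ν:ℕ) + c₁ + c₂ = r - 2 then 1 else 0)
          + (if d₁ + d₂ + (μ:ℕ) = r - 2 then 1 else 0) * v ν
      else 0)
    = (if h : c₁ + c₂ < r - 1 then u ⟨c₁ + c₂, h⟩ else 0)
      + (if h : d₁ + d₂ < r - 1 then v ⟨d₁ + d₂, h⟩ else 0) := by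
  have hsplit : ∀ (μ ν : Fin (r-1)),
      (if (μ:ℕ) + (ν:ℕ) = r - 2 then
        u μ * (if (ν:ℕ) + c₁ + c₂ = r - 2 then 1 else 0)
          + (if d₁ + d₂ + (μ:ℕ) = r - 2 then 1 else 0) * v ν
      else 0)
      = (if (μ:ℕ) + (ν:ℕ) = r - 2 then
          u μ * (if (ν:ℕ) + c₁ + c₂ = r - 2 then 1 else 0) else 0)
        + (if (μ:ℕ) + (ν:ℕ) = r - 2 then
          (if d₁ + d₂ + (μ:ℕ) = r - 2 then 1 else 0) * v ν else 0) := by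
    intro μ ν; split_ifs <;> simp
  simp only [hsplit, Finset.sum_add_distrib]
  congr 1
  · -- first double sum
    have hinner : ∀ μ : Fin (r-1),
        (∑ ν : Fin (r-1), if (μ:ℕ) + (ν:ℕ) = r - 2 then
          u μ * (if (ν:ℕ) + c₁ + c₂ = r - 2 then 1 else 0) else 0)
        = if (μ:ℕ) = c₁ + c₂ then u μ else 0 := by
      intro μ
      have hμ : (μ:ℕ) ≤ r - 2 := by have := μ.isLt; omega
      rw [Finset.sum_eq_single (⟨r - 2 - μ, by omega⟩ : Fin (r-1))]
      · simp only
        rw [if_pos (by omega)]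
        split_ifs with h1 h2 h2 <;> first | ring1 | (exfalso; omega)
      · intro ν _ hν
        rw [if_neg]
        intro hcon
        exact hν (Fin.ext (by simp only [Fin.val_mk] at hcon ⊢; omega))
      · intro h; exact absurd (Finset.mem_univ _) h
    rw [Finset.sum_congr rfl (fun μ _ => hinner μ)]
    split_ifs with h
    · rw [Finset.sum_eq_single (⟨c₁ + c₂, h⟩ : Fin (r-1))]
      · rw [if_pos rfl]
      · intro μ _ hμ
        rw [if_neg]
        intro hcon
        exact hμ (Fin.ext hcon)
      · intro h; exact absurd (Finset.mem_univ _) h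
    · apply Finset.sum_eq_zero
      intro μ _
      rw [if_neg]
      have := μ.isLt; omega
  · -- second double sum
    have hinner : ∀ μ : Fin (r-1),
        (∑ ν : Fin (r-1), if (μ:ℕ) + (ν:ℕ) = r - 2 then
          (if d₁ + d₂ + (μ:ℕ) = r - 2 then 1 else 0) * v ν else 0)
        = (if d₁ + d₂ + (μ:ℕ) = r - 2 then 1 else 0) * v ⟨r - 2 - μ, by have := μ.isLt; omega⟩ := by
      intro μ
      have hμ : (μ:ℕ) ≤ r - 2 := by have := μ.isLt; omega
      rw [Finset.sum_eq_single (⟨r - 2 - μ, by omega⟩ : Fin (r-1))]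
      · rw [if_pos (by simp only [Fin.val_mk]; omega)]
      · intro ν _ hν
        rw [if_neg]
        intro hcon
        exact hν (Fin.ext (by simp only [Fin.val_mk] at hcon ⊢; omega))
      · intro h; exact absurd (Finset.mem_univ _) h
    rw [Finset.sum_congr rfl (fun μ _ => hinner μ)]
    split_ifs with h
    · rw [Finset.sum_eq_single (⟨r - 2 - (d₁ + d₂), by omega⟩ : Fin (r-1))]
      · rw [if_pos (by simp only [Fin.val_mk]; omega), one_mul]
        congr 1
        exact Fin.ext (by simp only [Fin.val_mk]; omega)
      · intro μ _ hμ
        rw [if_neg, zero_mul]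
        intro hcon
        exact hμ (Fin.ext (by simp only [Fin.val_mk] at hcon ⊢; omega))
      · intro h; exact absurd (Finset.mem_univ _) h
    · apply Finset.sum_eq_zero
      intro μ _
      rw [if_neg, zero_mul]
      have := μ.isLt; omega
theorem rsu_comb (r n : ℕ) (hr : 3 ≤ r) (hn : 4 ≤ n)
    (g : (Fin (r - 1) →₀ ℕ) → ℚ)
    (H0 : ∀ s : Fin (r-1) →₀ ℕ, (∑ j, s j) = n →
        ¬((∑ j : Fin (r-1), (j : ℕ) * s j) + (2 * r + 2) = r * n) → g s = 0)
    (Hrel : ∀ m : Fin (r-1) →₀ ℕ, (∑ j, m j) = n - 3 →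
      ∀ α β γ δ : Fin (r-1),
        rsuMer r g m α β ((γ:ℕ)+(δ:ℕ)) + rsuMer r g m γ δ ((α:ℕ)+(β:ℕ))
          = rsuMer r g m α γ ((β:ℕ)+(δ:ℕ)) + rsuMer r g m β δ ((α:ℕ)+(γ:ℕ)))
    (H4 : ∀ (h1 : (1:ℕ) < r - 1) (h2 : r - 2 < r - 1), n = 4 →
        g (Finsupp.single (⟨1,h1⟩ : Fin (r-1)) 2
            + Finsupp.single (⟨r-2,h2⟩ : Fin (r-1)) 2) = 0) :
    ∀ s, (∑ j, s j) = n → g s = 0 := by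
  have hz0 : (0:ℕ) < r - 1 := by omega
  have h1r : (1:ℕ) < r - 1 := by omega
  suffices key : ∀ K : ℕ, ∀ s : Fin (r-1) →₀ ℕ, (∑ j, s j) = n →
      n * ((r-2)*(r-2)) < (∑ j : Fin (r-1), ((j:ℕ)*(j:ℕ)) * s j) + K → g s = 0 by
    intro s hs
    exact key (n*((r-2)*(r-2)) + 1) s hs (by omega)
  intro K
  induction K with
  | zero =>
    intro s hs hlt
    exfalso
    have hb : (∑ j : Fin (r-1), ((j:ℕ)*(j:ℕ)) * s j) ≤ ((r-2)*(r-2)) * n := by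
      rw [← hs]
      exact rsu_wsum_le _ s _ (fun j _ =>
        Nat.mul_le_mul (by have := j.isLt; omega) (by have := j.isLt; omega))
    have hc : ((r-2)*(r-2)) * n = n * ((r-2)*(r-2)) := Nat.mul_comm _ _
    omega
  | succ K IH =>
    intro s hs hlt
    by_cases hw : (∑ j : Fin (r-1), (j:ℕ) * s j) + (2*r+2) = r*n
    swap
    · exact H0 s hs hw
    by_cases h0 : s ⟨0, hz0⟩ = 0
    · -- CASE B : all entries positive
      have hpos : ∀ x : Fin (r-1), s x ≠ 0 → 1 ≤ (x:ℕ) := by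
        intro x hx
        by_contra hc
        push_neg at hc
        have hx0 : x = ⟨0, hz0⟩ := Fin.ext (by simp only [Fin.val_mk]; omega)
        rw [hx0] at hx; exact hx h0
      obtain ⟨i, t₁, hti, himax⟩ := rsu_popMax s (fun x => (x:ℕ)) (by omega)
      have hd1 : (∑ x : Fin (r-1), s x) = (∑ x : Fin (r-1), t₁ x) + 1 := by
        rw [hti, rsu_sum_add, rsu_sum_single]
      obtain ⟨j, t₂, ht₁, hjmax⟩ := rsu_popMax t₁ (fun x => (x:ℕ)) (by omega)
      have hd2 : (∑ x : Fin (r-1), t₁ x) = (∑ x : Fin (r-1), t₂ x) + 1 := by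
        rw [ht₁, rsu_sum_add, rsu_sum_single]
      obtain ⟨k, m, ht₂, hkmax⟩ := rsu_popMax t₂ (fun x => (x:ℕ)) (by omega)
      have hd3 : (∑ x : Fin (r-1), t₂ x) = (∑ x : Fin (r-1), m x) + 1 := by
        rw [ht₂, rsu_sum_add, rsu_sum_single]
      have hdegm : (∑ x : Fin (r-1), m x) = n - 3 := by omega
      -- pointwise chains
      have hle1 : ∀ x, t₁ x ≤ s x := by
        intro x; rw [hti, Finsupp.add_apply]; exact Nat.le_add_right _ _
      have hle2 : ∀ x, t₂ x ≤ t₁ x := by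
        intro x; rw [ht₁, Finsupp.add_apply]; exact Nat.le_add_right _ _
      have hle3 : ∀ x, m x ≤ t₂ x := by
        intro x; rw [ht₂, Finsupp.add_apply]; exact Nat.le_add_right _ _
      have ht₁j : t₁ j ≠ 0 := by
        rw [ht₁, Finsupp.add_apply, Finsupp.single_eq_same]; omega
      have ht₂k : t₂ k ≠ 0 := by
        rw [ht₂, Finsupp.add_apply, Finsupp.single_eq_same]; omega
      have hsj : s j ≠ 0 := by have := hle1 j; omega
      have hsk : s k ≠ 0 := by have := hle1 k; have := hle2 k; omega
      have hji : (j:ℕ) ≤ (i:ℕ) := himax j hsj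
      have hkj : (k:ℕ) ≤ (j:ℕ) := hjmax k (by have := hle2 k; omega)
      have hk1 : 1 ≤ (k:ℕ) := hpos k hsk
      -- weights
      have hws1 : (∑ x : Fin (r-1), (x:ℕ) * s x) = (∑ x : Fin (r-1), (x:ℕ) * t₁ x) + (i:ℕ) := by
        rw [hti, rsu_wsum_add, rsu_wsum_single]; simp
      have hws2 : (∑ x : Fin (r-1), (x:ℕ) * t₁ x) = (∑ x : Fin (r-1), (x:ℕ) * t₂ x) + (j:ℕ) := by
        rw [ht₁, rsu_wsum_add, rsu_wsum_single]; simp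
      have hws3 : (∑ x : Fin (r-1), (x:ℕ) * t₂ x) = (∑ x : Fin (r-1), (x:ℕ) * m x) + (k:ℕ) := by
        rw [ht₂, rsu_wsum_add, rsu_wsum_single]; simp
      have hiU : (i:ℕ) < r - 1 := i.isLt
      have hjU : (j:ℕ) < r - 1 := j.isLt
      -- i + j ≥ r - 1
      have hijr : r - 1 ≤ (i:ℕ) + (j:ℕ) := by
        by_contra hcon
        push_neg at hcon
        have hb1 : (∑ x : Fin (r-1), (x:ℕ) * t₁ x) ≤ (j:ℕ) * (∑ x : Fin (r-1), t₁ x) :=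
          rsu_wsum_le _ _ _ hjmax
        have hdt₁ : (∑ x : Fin (r-1), t₁ x) = n - 1 := by omega
        rw [hdt₁] at hb1
        have hmc : (j:ℕ) * (n-1) = (n-1) * (j:ℕ) := Nat.mul_comm _ _
        exact rsu_arithB r n (i:ℕ) (j:ℕ) (∑ x : Fin (r-1), (x:ℕ) * s x) hr hn hw hji
          (by omega) (by omega)
      by_cases hk : (k:ℕ) = 1
      · -- base case: n = 4, s = {r-2, r-2, 1, 1}
        have hmne : ∀ x, m x ≠ 0 → s x ≠ 0 := by
          intro x hx
          have := hle1 x; have := hle2 x; have := hle3 x; omega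
        have hm_ge : (∑ x : Fin (r-1), m x) ≤ (∑ x : Fin (r-1), (x:ℕ) * m x) :=
          rsu_wsum_ge _ _ (fun x hx => hpos x (hmne x hx))
        have hm_le : (∑ x : Fin (r-1), (x:ℕ) * m x) ≤ (k:ℕ) * (∑ x : Fin (r-1), m x) :=
          rsu_wsum_le _ _ _ (fun x hx => hkmax x (by have := hle3 x; omega))
        rw [hdegm, hk] at hm_le
        rw [hdegm] at hm_ge
        have hwm : (∑ x : Fin (r-1), (x:ℕ) * m x) = n - 3 := by omega
        obtain ⟨hn4, hiv, hjv⟩ := rsu_arithC r n (i:ℕ) (j:ℕ) hr hn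
          (by omega) (by omega) (by omega)
        obtain ⟨l, m₀, hml, _⟩ := rsu_popMax m (fun x => (x:ℕ)) (by omega)
        have hd4 : (∑ x : Fin (r-1), m x) = (∑ x : Fin (r-1), m₀ x) + 1 := by
          rw [hml, rsu_sum_add, rsu_sum_single]
        have hm₀ : m₀ = 0 := rsu_eq_zero _ (by omega)
        have hml' : m l ≠ 0 := by
          rw [hml, Finsupp.add_apply, Finsupp.single_eq_same]; omega
        have hl1 : (l:ℕ) = 1 := by
          have hlk : (l:ℕ) ≤ (k:ℕ) := hkmax l (by have := hle3 l; omega)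
          have := hpos l (hmne l hml')
          omega
        have h2r : r - 2 < r - 1 := by omega
        have hieq : i = ⟨r-2, h2r⟩ := Fin.ext (by simp [Fin.val_mk]; omega)
        have hjeq : j = ⟨r-2, h2r⟩ := Fin.ext (by simp [Fin.val_mk]; omega)
        have hkeq : k = ⟨1, h1r⟩ := Fin.ext (by simp [Fin.val_mk]; omega)
        have hleq : l = ⟨1, h1r⟩ := Fin.ext (by simp [Fin.val_mk]; omega)
        have hseq : s = Finsupp.single (⟨1,h1r⟩ : Fin (r-1)) 2
            + Finsupp.single (⟨r-2,h2r⟩ : Fin (r-1)) 2 := by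
          have h2s : ∀ (x : Fin (r-1)), Finsupp.single x 2
              = Finsupp.single x 1 + Finsupp.single x 1 := by
            intro x; rw [← Finsupp.single_add]
          rw [hti, ht₁, ht₂, hml, hm₀, hieq, hjeq, hkeq, hleq, h2s, h2s]
          abel
        rw [hseq]
        exact H4 h1r h2r hn4
      · -- recursive case: k ≥ 2
        have hk2 : 2 ≤ (k:ℕ) := by omega
        have hβp : (k:ℕ) - 1 < r - 1 := by have := k.isLt; omega
        have hrel := Hrel m hdegm ⟨1, h1r⟩ ⟨(k:ℕ)-1, hβp⟩ i j
        simp only [rsuMer, Fin.val_mk] at hrel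
        rw [show 1 + ((k:ℕ)-1) = (k:ℕ) from by omega] at hrel
        rw [dif_neg (show ¬((i:ℕ) + (j:ℕ) < r-1) from by omega),
            dif_pos k.isLt] at hrel
        simp only [Fin.eta] at hrel
        have hseq : m + Finsupp.single i 1 + Finsupp.single j 1 + Finsupp.single k 1
            = s := by rw [hti, ht₁, ht₂]; abel
        rw [hseq] at hrel
        -- Φ decomposition of s
        have hΦs : (∑ x : Fin (r-1), ((x:ℕ)*(x:ℕ)) * s x)
            = (∑ x : Fin (r-1), ((x:ℕ)*(x:ℕ)) * m x) + (k:ℕ)*(k:ℕ) + (j:ℕ)*(j:ℕ) + (i:ℕ)*(i:ℕ) := by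
          rw [hti, ht₁, ht₂, rsu_wsum_add, rsu_wsum_add, rsu_wsum_add,
              rsu_wsum_single, rsu_wsum_single, rsu_wsum_single]
          simp only [mul_one]
        have hki : (k:ℕ) ≤ (i:ℕ) := le_trans hkj hji
        by_cases h3 : (k:ℕ) - 1 + (j:ℕ) < r - 1
        · rw [dif_pos h3] at hrel
          have hg3 : g (m + Finsupp.single (⟨1, h1r⟩ : Fin (r-1)) 1 + Finsupp.single i 1
              + Finsupp.single (⟨(k:ℕ)-1+(j:ℕ), h3⟩ : Fin (r-1)) 1) = 0 := by
            apply IH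
            · rw [rsu_sum_add, rsu_sum_add, rsu_sum_add, rsu_sum_single,
                rsu_sum_single, rsu_sum_single, hdegm]; omega
            · have hΦ3 : (∑ x : Fin (r-1), ((x:ℕ)*(x:ℕ)) * ((m + Finsupp.single (⟨1, h1r⟩ : Fin (r-1)) 1
                  + Finsupp.single i 1 + Finsupp.single (⟨(k:ℕ)-1+(j:ℕ), h3⟩ : Fin (r-1)) 1 : Fin (r-1) →₀ ℕ)) x)
                  = (∑ x : Fin (r-1), ((x:ℕ)*(x:ℕ)) * m x) + 1*1 + (i:ℕ)*(i:ℕ)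
                    + ((k:ℕ)-1+(j:ℕ))*((k:ℕ)-1+(j:ℕ)) := by
                rw [rsu_wsum_add, rsu_wsum_add, rsu_wsum_add,
                  rsu_wsum_single, rsu_wsum_single, rsu_wsum_single]
                simp only [mul_one, Fin.val_mk]
              have harD := rsu_arithD (j:ℕ) (k:ℕ) hk2 hkj
              omega
          rw [hg3] at hrel
          by_cases h4 : 1 + (i:ℕ) < r - 1
          · rw [dif_pos h4] at hrel
            have hg4 : g (m + Finsupp.single (⟨(k:ℕ)-1, hβp⟩ : Fin (r-1)) 1 + Finsupp.single j 1
                + Finsupp.single (⟨1+(i:ℕ), h4⟩ : Fin (r-1)) 1) = 0 := by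
              apply IH
              · rw [rsu_sum_add, rsu_sum_add, rsu_sum_add, rsu_sum_single,
                  rsu_sum_single, rsu_sum_single, hdegm]; omega
              · have hΦ4 : (∑ x : Fin (r-1), ((x:ℕ)*(x:ℕ)) * ((m + Finsupp.single (⟨(k:ℕ)-1, hβp⟩ : Fin (r-1)) 1
                    + Finsupp.single j 1 + Finsupp.single (⟨1+(i:ℕ), h4⟩ : Fin (r-1)) 1 : Fin (r-1) →₀ ℕ)) x)
                    = (∑ x : Fin (r-1), ((x:ℕ)*(x:ℕ)) * m x) + ((k:ℕ)-1)*((k:ℕ)-1)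
                      + (j:ℕ)*(j:ℕ) + (1+(i:ℕ))*(1+(i:ℕ)) := by
                  rw [rsu_wsum_add, rsu_wsum_add, rsu_wsum_add,
                    rsu_wsum_single, rsu_wsum_single, rsu_wsum_single]
                  simp only [mul_one, Fin.val_mk]
                have harE := rsu_arithE (i:ℕ) (k:ℕ) hk2 hki
                omega
            rw [hg4] at hrel
            linarith
          · rw [dif_neg h4] at hrel
            linarith
        · rw [dif_neg h3] at hrel
          by_cases h4 : 1 + (i:ℕ) < r - 1
          · rw [dif_pos h4] at hrel
            have hg4 : g (m + Finsupp.single (⟨(k:ℕ)-1, hβp⟩ : Fin (r-1)) 1 + Finsupp.single j 1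
                + Finsupp.single (⟨1+(i:ℕ), h4⟩ : Fin (r-1)) 1) = 0 := by
              apply IH
              · rw [rsu_sum_add, rsu_sum_add, rsu_sum_add, rsu_sum_single,
                  rsu_sum_single, rsu_sum_single, hdegm]; omega
              · have hΦ4 : (∑ x : Fin (r-1), ((x:ℕ)*(x:ℕ)) * ((m + Finsupp.single (⟨(k:ℕ)-1, hβp⟩ : Fin (r-1)) 1
                    + Finsupp.single j 1 + Finsupp.single (⟨1+(i:ℕ), h4⟩ : Fin (r-1)) 1 : Fin (r-1) →₀ ℕ)) x)
                    = (∑ x : Fin (r-1), ((x:ℕ)*(x:ℕ)) * m x) + ((k:ℕ)-1)*((k:ℕ)-1)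
                      + (j:ℕ)*(j:ℕ) + (1+(i:ℕ))*(1+(i:ℕ)) := by
                  rw [rsu_wsum_add, rsu_wsum_add, rsu_wsum_add,
                    rsu_wsum_single, rsu_wsum_single, rsu_wsum_single]
                  simp only [mul_one, Fin.val_mk]
                have harE := rsu_arithE (i:ℕ) (k:ℕ) hk2 hki
                omega
            rw [hg4] at hrel
            linarith
          · rw [dif_neg h4] at hrel
            linarith
    · -- CASE A : s has a zero entry
      obtain ⟨t, hst⟩ : ∃ t, s = t + Finsupp.single ⟨0, hz0⟩ 1 :=
        ⟨_, rsu_pop s _ h0⟩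
      have hdegs : (∑ x : Fin (r-1), s x) = (∑ x : Fin (r-1), t x) + 1 := by
        rw [hst, rsu_sum_add, rsu_sum_single]
      obtain ⟨i, t₁, hti, himax⟩ := rsu_popMax t (fun x => (x:ℕ)) (by omega)
      have hdegt : (∑ x : Fin (r-1), t x) = (∑ x : Fin (r-1), t₁ x) + 1 := by
        rw [hti, rsu_sum_add, rsu_sum_single]
      obtain ⟨j, t₂, ht₁, hjmax⟩ := rsu_popMax t₁ (fun x => (x:ℕ)) (by omega)
      have hdegt₁ : (∑ x : Fin (r-1), t₁ x) = (∑ x : Fin (r-1), t₂ x) + 1 := by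
        rw [ht₁, rsu_sum_add, rsu_sum_single]
      have hdegm : (∑ x : Fin (r-1), t₂ x) = n - 3 := by omega
      have htj : t j ≠ 0 := by
        rw [hti, ht₁, Finsupp.add_apply, Finsupp.add_apply, Finsupp.single_eq_same]
        omega
      have hji : (j:ℕ) ≤ (i:ℕ) := himax j htj
      have hws : (∑ x : Fin (r-1), (x:ℕ) * s x) = (∑ x : Fin (r-1), (x:ℕ) * t x) := by
        rw [hst, rsu_wsum_add, rsu_wsum_single]; simp
      have hwt : (∑ x : Fin (r-1), (x:ℕ) * t x) = (∑ x : Fin (r-1), (x:ℕ) * t₁ x) + (i:ℕ) := by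
        rw [hti, rsu_wsum_add, rsu_wsum_single]; simp
      have hwt₁ : (∑ x : Fin (r-1), (x:ℕ) * t₁ x) = (∑ x : Fin (r-1), (x:ℕ) * t₂ x) + (j:ℕ) := by
        rw [ht₁, rsu_wsum_add, rsu_wsum_single]; simp
      have hiU : (i:ℕ) < r - 1 := i.isLt
      have hjU : (j:ℕ) < r - 1 := j.isLt
      have hijr : r - 1 ≤ (i:ℕ) + (j:ℕ) := by
        by_contra hcon
        push_neg at hcon
        have hb1 : (∑ x : Fin (r-1), (x:ℕ) * t₁ x) ≤ (j:ℕ) * (∑ x : Fin (r-1), t₁ x) :=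
          rsu_wsum_le _ _ _ hjmax
        have hdt₁ : (∑ x : Fin (r-1), t₁ x) = n - 2 := by omega
        rw [hdt₁] at hb1
        have hmc : (j:ℕ) * (n-2) = (n-2) * (j:ℕ) := Nat.mul_comm _ _
        exact rsu_arithA r n (i:ℕ) (j:ℕ) (∑ x : Fin (r-1), (x:ℕ) * s x) hr hn hw hji
          (by omega) (by omega)
      have hj1 : 1 ≤ (j:ℕ) := by omega
      have hαp : r - 1 - (j:ℕ) < r - 1 := by omega
      have hβp : (i:ℕ) + (j:ℕ) - (r-1) < r - 1 := by omega
      have hrel := Hrel t₂ hdegm ⟨r - 1 - (j:ℕ), hαp⟩ ⟨(i:ℕ)+(j:ℕ)-(r-1), hβp⟩ j ⟨0, hz0⟩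
      simp only [rsuMer, Fin.val_mk, add_zero] at hrel
      rw [show r - 1 - (j:ℕ) + ((i:ℕ)+(j:ℕ)-(r-1)) = (i:ℕ) from by omega] at hrel
      rw [show r - 1 - (j:ℕ) + (j:ℕ) = r - 1 from by omega] at hrel
      rw [dif_pos hjU, dif_pos hiU, dif_pos hβp,
          dif_neg (lt_irrefl (r-1))] at hrel
      simp only [Fin.eta] at hrel
      have hsEq : t₂ + Finsupp.single j 1 + Finsupp.single (⟨0, hz0⟩ : Fin (r-1)) 1
          + Finsupp.single i 1 = s := by
        rw [hst, hti, ht₁]; abel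
      rw [hsEq] at hrel
      have hAA : t₂ + Finsupp.single (⟨r-1-(j:ℕ), hαp⟩ : Fin (r-1)) 1
            + Finsupp.single (⟨(i:ℕ)+(j:ℕ)-(r-1), hβp⟩ : Fin (r-1)) 1
            + Finsupp.single j 1
          = t₂ + Finsupp.single (⟨r-1-(j:ℕ), hαp⟩ : Fin (r-1)) 1
            + Finsupp.single j 1
            + Finsupp.single (⟨(i:ℕ)+(j:ℕ)-(r-1), hβp⟩ : Fin (r-1)) 1 := by
        abel
      rw [hAA] at hrel
      linarith
set_option maxHeartbeats 2000000 in
theorem rspin_potential_unique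
    (r : ℕ) (hr : 3 ≤ r)
    (F₁ F₂ : MvPolynomial (Fin (r - 1)) ℚ)
    (hhom : ∀ F ∈ ({F₁, F₂} : Set (MvPolynomial (Fin (r - 1)) ℚ)),
      ∀ m ∈ F.support, ∑ α : Fin (r - 1), (r - (α : ℕ)) * m α = 2 * r + 2)
    (hWDVV : ∀ F ∈ ({F₁, F₂} : Set (MvPolynomial (Fin (r - 1)) ℚ)),
      ∀ α β γ δ : Fin (r - 1),
        (∑ μ : Fin (r - 1), ∑ ν : Fin (r - 1),
          if (μ : ℕ) + (ν : ℕ) = r - 2 then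
            pderiv α (pderiv β (pderiv μ F)) * pderiv ν (pderiv γ (pderiv δ F))
          else 0)
        =
        (∑ μ : Fin (r - 1), ∑ ν : Fin (r - 1),
          if (μ : ℕ) + (ν : ℕ) = r - 2 then
            pderiv α (pderiv γ (pderiv μ F)) * pderiv ν (pderiv β (pderiv δ F))
          else 0))
    (h3pt : ∀ F ∈ ({F₁, F₂} : Set (MvPolynomial (Fin (r - 1)) ℚ)),
      ∀ α β γ : Fin (r - 1),
        MvPolynomial.constantCoeff (pderiv α (pderiv β (pderiv γ F))) =
          if (α : ℕ) + (β : ℕ) + (γ : ℕ) = r - 2 then 1 else 0)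
    (h4pt : ∀ F ∈ ({F₁, F₂} : Set (MvPolynomial (Fin (r - 1)) ℚ)),
      MvPolynomial.constantCoeff
        (pderiv (⟨r - 2, by omega⟩ : Fin (r - 1))
          (pderiv (⟨r - 2, by omega⟩ : Fin (r - 1))
            (pderiv (⟨1, by omega⟩ : Fin (r - 1))
              (pderiv (⟨1, by omega⟩ : Fin (r - 1)) F)))) = 1 / (r : ℚ)) :
    F₁ = F₂ := by
  have hmem₁ : F₁ ∈ ({F₁, F₂} : Set (MvPolynomial (Fin (r - 1)) ℚ)) :=
    Set.mem_insert _ _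
  have hmem₂ : F₂ ∈ ({F₁, F₂} : Set (MvPolynomial (Fin (r - 1)) ℚ)) :=
    Set.mem_insert_of_mem _ rfl
  rw [← sub_eq_zero]
  have hhomG : ∀ s : Fin (r-1) →₀ ℕ, coeff s (F₁ - F₂) ≠ 0 →
      (∑ α : Fin (r-1), (r - (α:ℕ)) * s α) = 2*r+2 := by
    intro s hsne
    rw [MvPolynomial.coeff_sub] at hsne
    by_cases h1 : coeff s F₁ = 0
    · have h2 : coeff s F₂ ≠ 0 := by
        intro h; apply hsne; rw [h1, h]; ring
      exact hhom F₂ hmem₂ s (MvPolynomial.mem_support_iff.mpr h2)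
    · exact hhom F₁ hmem₁ s (MvPolynomial.mem_support_iff.mpr h1)
  have hsplit : ∀ s : Fin (r-1) →₀ ℕ,
      (∑ α : Fin (r-1), (r - (α:ℕ)) * s α) + (∑ α : Fin (r-1), (α:ℕ) * s α)
        = r * (∑ α : Fin (r-1), s α) := by
    intro s
    rw [← Finset.sum_add_distrib, Finset.mul_sum]
    apply Finset.sum_congr rfl
    intro x _
    rw [← Nat.add_mul]
    congr 1
    have := x.isLt; omega
  have main : ∀ n : ℕ, ∀ s : Fin (r-1) →₀ ℕ, (∑ j : Fin (r-1), s j) = n →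
      coeff s (F₁ - F₂) = 0 := by
    intro n
    induction n using Nat.strong_induction_on with
    | _ n IH =>
    intro s hs
    by_contra hz
    have hwt := hhomG s hz
    have hwn : (∑ α : Fin (r-1), (α:ℕ) * s α) + (2*r+2) = r * n := by
      have h := hsplit s; rw [hs] at h; omega
    have hn3 : 3 ≤ n := by
      by_contra hc
      push_neg at hc
      have h2 : r * n ≤ r * 2 := Nat.mul_le_mul_left r (by omega)
      have h3 : r * 2 = 2 * r := Nat.mul_comm _ _
      omega
    have hchain3 : ∀ (x y z : Fin (r-1)) (p : Fin (r-1) →₀ ℕ),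
        rsuN p * coeff p (pderiv x (pderiv y (pderiv z (F₁ - F₂))))
        = rsuN (p + Finsupp.single x 1 + Finsupp.single y 1 + Finsupp.single z 1)
          * coeff (p + Finsupp.single x 1 + Finsupp.single y 1 + Finsupp.single z 1)
            (F₁ - F₂) := by
      intro x y z p
      rw [rsu_Nstep, rsu_Nstep, rsu_Nstep]
    rcases Nat.lt_or_ge n 4 with h4 | h4
    · -- n = 3
      obtain ⟨a, u1, hsa, _⟩ := rsu_popMax s (fun _ => 0) (by omega)
      have hd1 : (∑ x : Fin (r-1), s x) = (∑ x : Fin (r-1), u1 x) + 1 := by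
        rw [hsa, rsu_sum_add, rsu_sum_single]
      obtain ⟨b, u2, hub, _⟩ := rsu_popMax u1 (fun _ => 0) (by omega)
      have hd2 : (∑ x : Fin (r-1), u1 x) = (∑ x : Fin (r-1), u2 x) + 1 := by
        rw [hub, rsu_sum_add, rsu_sum_single]
      obtain ⟨c, u3, huc, _⟩ := rsu_popMax u2 (fun _ => 0) (by omega)
      have hd3 : (∑ x : Fin (r-1), u2 x) = (∑ x : Fin (r-1), u3 x) + 1 := by
        rw [huc, rsu_sum_add, rsu_sum_single]
      have hu3 : u3 = 0 := rsu_eq_zero _ (by omega)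
      have hcc : coeff 0 (pderiv c (pderiv b (pderiv a (F₁ - F₂)))) = 0 := by
        have e₁ := h3pt F₁ hmem₁ c b a
        have e₂ := h3pt F₂ hmem₂ c b a
        rw [MvPolynomial.constantCoeff_eq] at e₁ e₂
        rw [map_sub, map_sub, map_sub, MvPolynomial.coeff_sub, e₁, e₂]
        ring
      have hch := hchain3 c b a 0
      have hseq : (0 : Fin (r-1) →₀ ℕ) + Finsupp.single c 1 + Finsupp.single b 1
          + Finsupp.single a 1 = s := by
        rw [hsa, hub, huc, hu3]
      rw [hseq, hcc, mul_zero] at hch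
      exact hz ((mul_eq_zero.mp hch.symm).resolve_left (rsuN_ne_zero s))
    · -- n ≥ 4 : use the combinatorial lemma
      apply hz
      have hcomb := rsu_comb r n hr h4 (fun s => rsuN s * coeff s (F₁ - F₂)) ?_ ?_ ?_
      · have h := hcomb s hs
        exact (mul_eq_zero.mp h).resolve_left (rsuN_ne_zero s)
      · -- H0
        intro s' hs' hnw
        by_cases h : coeff s' (F₁ - F₂) = 0
        · simp only [h, mul_zero]
        · exfalso
          apply hnw
          have h1 := hhomG s' h
          have h2 := hsplit s'
          rw [hs'] at h2
          omega
      · -- Hrel : the WDVV bridge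
        intro m hm α β γ δ
        -- low-degree coefficients of triple derivatives of G vanish
        have hlow : ∀ p : Fin (r-1) →₀ ℕ, (∑ x : Fin (r-1), p x) < n - 3 →
            ∀ (x y z : Fin (r-1)),
              coeff p (pderiv x (pderiv y (pderiv z (F₁ - F₂)))) = 0 := by
          intro p hp x y z
          have hch := hchain3 x y z p
          have hdeg : (∑ t : Fin (r-1), ((p + Finsupp.single x 1 + Finsupp.single y 1
              + Finsupp.single z 1 : Fin (r-1) →₀ ℕ)) t) = (∑ t : Fin (r-1), p t) + 3 := by
            rw [rsu_sum_add, rsu_sum_add, rsu_sum_add, rsu_sum_single,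
              rsu_sum_single, rsu_sum_single]
          have h0' := IH ((∑ t : Fin (r-1), p t) + 3) (by omega) _ hdeg
          rw [h0', mul_zero] at hch
          exact (mul_eq_zero.mp hch).resolve_left (rsuN_ne_zero p)
        have keyA : ∀ (x y z u v w2 : Fin (r-1)) (F : MvPolynomial (Fin (r-1)) ℚ),
            coeff m ((pderiv x (pderiv y (pderiv z (F₁ - F₂))))
                * (pderiv u (pderiv v (pderiv w2 F))))
            = coeff m (pderiv x (pderiv y (pderiv z (F₁ - F₂))))
                * coeff 0 (pderiv u (pderiv v (pderiv w2 F))) := by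
          intro x y z u v w2 F
          rw [MvPolynomial.coeff_mul]
          apply Finset.sum_eq_single_of_mem ((m, 0))
            (Finset.HasAntidiagonal.mem_antidiagonal.mpr (add_zero m))
          intro p hp hne
          have hmemp := Finset.HasAntidiagonal.mem_antidiagonal.mp hp
          by_cases h1 : p.1 = m
          · exfalso
            apply hne
            have h2 : p.2 = 0 := by
              rw [h1] at hmemp
              exact add_left_cancel (show m + p.2 = m + 0 by rw [add_zero]; exact hmemp)
            exact Prod.ext h1 h2
          · have hsum : (∑ x : Fin (r-1), p.1 x) + (∑ x : Fin (r-1), p.2 x)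
                = (∑ x : Fin (r-1), m x) := by rw [← rsu_sum_add, hmemp]
            have hne2 : (∑ x : Fin (r-1), p.2 x) ≠ 0 := by
              intro hcon
              apply h1
              have h3 := rsu_eq_zero p.2 hcon
              rw [h3, add_zero] at hmemp
              exact hmemp
            have hdlt : (∑ x : Fin (r-1), p.1 x) < n - 3 := by omega
            rw [hlow p.1 hdlt, zero_mul]
        have keyB : ∀ (x y z u v w2 : Fin (r-1)),
            coeff m ((pderiv x (pderiv y (pderiv z F₂)))
                * (pderiv u (pderiv v (pderiv w2 (F₁ - F₂)))))
            = coeff 0 (pderiv x (pderiv y (pderiv z F₂)))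
                * coeff m (pderiv u (pderiv v (pderiv w2 (F₁ - F₂)))) := by
          intro x y z u v w2
          rw [MvPolynomial.coeff_mul]
          apply Finset.sum_eq_single_of_mem ((0, m))
            (Finset.HasAntidiagonal.mem_antidiagonal.mpr (zero_add m))
          intro p hp hne
          have hmemp := Finset.HasAntidiagonal.mem_antidiagonal.mp hp
          by_cases h1 : p.2 = m
          · exfalso
            apply hne
            have h2 : p.1 = 0 := by
              rw [h1] at hmemp
              exact add_right_cancel (show p.1 + m = 0 + m by rw [zero_add]; exact hmemp)
            exact Prod.ext h2 h1
          · have hsum : (∑ x : Fin (r-1), p.1 x) + (∑ x : Fin (r-1), p.2 x)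
                = (∑ x : Fin (r-1), m x) := by rw [← rsu_sum_add, hmemp]
            have hne2 : (∑ x : Fin (r-1), p.1 x) ≠ 0 := by
              intro hcon
              apply h1
              have h3 := rsu_eq_zero p.1 hcon
              rw [h3, zero_add] at hmemp
              exact hmemp
            have hdlt : (∑ x : Fin (r-1), p.2 x) < n - 3 := by omega
            rw [hlow p.2 hdlt, mul_zero]
        -- the mixed WDVV identity
        have htrans : ∀ (a b c d : Fin (r-1)),
            (∑ μ : Fin (r-1), ∑ ν : Fin (r-1),
              if (μ:ℕ) + (ν:ℕ) = r - 2 then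
                pderiv a (pderiv b (pderiv μ (F₁ - F₂)))
                    * pderiv ν (pderiv c (pderiv d F₁))
                  + pderiv a (pderiv b (pderiv μ F₂))
                    * pderiv ν (pderiv c (pderiv d (F₁ - F₂)))
              else 0)
            = (∑ μ : Fin (r-1), ∑ ν : Fin (r-1),
                if (μ:ℕ) + (ν:ℕ) = r - 2 then
                  pderiv a (pderiv b (pderiv μ F₁)) * pderiv ν (pderiv c (pderiv d F₁))
                else 0)
              - (∑ μ : Fin (r-1), ∑ ν : Fin (r-1),
                if (μ:ℕ) + (ν:ℕ) = r - 2 then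
                  pderiv a (pderiv b (pderiv μ F₂)) * pderiv ν (pderiv c (pderiv d F₂))
                else 0) := by
          intro a b c d
          rw [← Finset.sum_sub_distrib]
          apply Finset.sum_congr rfl
          intro μ _
          rw [← Finset.sum_sub_distrib]
          apply Finset.sum_congr rfl
          intro ν _
          split_ifs with h
          · simp only [map_sub]
            ring
          · simp
        have hMix : (∑ μ : Fin (r-1), ∑ ν : Fin (r-1),
              if (μ:ℕ) + (ν:ℕ) = r - 2 then
                pderiv α (pderiv β (pderiv μ (F₁ - F₂)))
                    * pderiv ν (pderiv γ (pderiv δ F₁))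
                  + pderiv α (pderiv β (pderiv μ F₂))
                    * pderiv ν (pderiv γ (pderiv δ (F₁ - F₂)))
              else 0)
            = (∑ μ : Fin (r-1), ∑ ν : Fin (r-1),
              if (μ:ℕ) + (ν:ℕ) = r - 2 then
                pderiv α (pderiv γ (pderiv μ (F₁ - F₂)))
                    * pderiv ν (pderiv β (pderiv δ F₁))
                  + pderiv α (pderiv γ (pderiv μ F₂))
                    * pderiv ν (pderiv β (pderiv δ (F₁ - F₂)))
              else 0) := by
          rw [htrans α β γ δ, htrans α γ β δ, hWDVV F₁ hmem₁ α β γ δ,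
            hWDVV F₂ hmem₂ α β γ δ]
        -- take coefficient of m
        have e := congrArg (coeff m) hMix
        have hcc₁ : ∀ (u v w2 : Fin (r-1)),
            coeff 0 (pderiv u (pderiv v (pderiv w2 F₁)))
              = if (u:ℕ) + (v:ℕ) + (w2:ℕ) = r - 2 then (1:ℚ) else 0 := by
          intro u v w2
          have h := h3pt F₁ hmem₁ u v w2
          rw [MvPolynomial.constantCoeff_eq] at h
          exact h
        have hcc₂ : ∀ (u v w2 : Fin (r-1)),
            coeff 0 (pderiv u (pderiv v (pderiv w2 F₂)))
              = if (u:ℕ) + (v:ℕ) + (w2:ℕ) = r - 2 then (1:ℚ) else 0 := by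
          intro u v w2
          have h := h3pt F₂ hmem₂ u v w2
          rw [MvPolynomial.constantCoeff_eq] at h
          exact h
        simp only [MvPolynomial.coeff_sum, apply_ite (coeff m),
          MvPolynomial.coeff_zero, MvPolynomial.coeff_add, keyA, keyB,
          hcc₁, hcc₂] at e
        rw [rsu_collapse r hr
            (fun μ => coeff m (pderiv α (pderiv β (pderiv μ (F₁ - F₂)))))
            (fun ν => coeff m (pderiv ν (pderiv γ (pderiv δ (F₁ - F₂)))))
            (γ:ℕ) (δ:ℕ) (α:ℕ) (β:ℕ),
          rsu_collapse r hr
            (fun μ => coeff m (pderiv α (pderiv γ (pderiv μ (F₁ - F₂)))))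
            (fun ν => coeff m (pderiv ν (pderiv β (pderiv δ (F₁ - F₂)))))
            (β:ℕ) (δ:ℕ) (α:ℕ) (γ:ℕ)] at e
        -- multiply by rsuN m
        have e2 := congrArg (fun q => rsuN m * q) e
        simp only [mul_add, mul_dite, mul_zero] at e2
        have hcoe : ∀ (x y z : Fin (r-1)),
            rsuN m * coeff m (pderiv x (pderiv y (pderiv z (F₁ - F₂))))
            = rsuN (m + Finsupp.single x 1 + Finsupp.single y 1 + Finsupp.single z 1)
              * coeff (m + Finsupp.single x 1 + Finsupp.single y 1
                  + Finsupp.single z 1) (F₁ - F₂) := fun x y z => hchain3 x y z m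
        simp only [hcoe] at e2
        -- fix the order of singles in the v-terms
        have hpermV1 : ∀ (z : Fin (r-1)),
            m + Finsupp.single z 1 + Finsupp.single γ 1 + Finsupp.single δ 1
            = m + Finsupp.single γ 1 + Finsupp.single δ 1 + Finsupp.single z 1 := by
          intro z; abel
        have hpermV2 : ∀ (z : Fin (r-1)),
            m + Finsupp.single z 1 + Finsupp.single β 1 + Finsupp.single δ 1
            = m + Finsupp.single β 1 + Finsupp.single δ 1 + Finsupp.single z 1 := by
          intro z; abel
        simp only [hpermV1, hpermV2] at e2
        simp only [rsuMer]
        exact e2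
      · -- H4
        intro hh1 hh2 hn4
        have e₁' : MvPolynomial.constantCoeff
            (pderiv (⟨r - 2, hh2⟩ : Fin (r - 1))
              (pderiv (⟨r - 2, hh2⟩ : Fin (r - 1))
                (pderiv (⟨1, hh1⟩ : Fin (r - 1))
                  (pderiv (⟨1, hh1⟩ : Fin (r - 1)) F₁)))) = 1 / (r:ℚ) :=
          h4pt F₁ hmem₁
        have e₂' : MvPolynomial.constantCoeff
            (pderiv (⟨r - 2, hh2⟩ : Fin (r - 1))
              (pderiv (⟨r - 2, hh2⟩ : Fin (r - 1))
                (pderiv (⟨1, hh1⟩ : Fin (r - 1))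
                  (pderiv (⟨1, hh1⟩ : Fin (r - 1)) F₂)))) = 1 / (r:ℚ) :=
          h4pt F₂ hmem₂
        rw [MvPolynomial.constantCoeff_eq] at e₁' e₂'
        have hcc : coeff 0
            (pderiv (⟨r - 2, hh2⟩ : Fin (r - 1))
              (pderiv (⟨r - 2, hh2⟩ : Fin (r - 1))
                (pderiv (⟨1, hh1⟩ : Fin (r - 1))
                  (pderiv (⟨1, hh1⟩ : Fin (r - 1)) (F₁ - F₂))))) = 0 := by
          rw [map_sub, map_sub, map_sub, map_sub, MvPolynomial.coeff_sub, e₁', e₂']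
          ring
        have hch : rsuN (0 : Fin (r-1) →₀ ℕ) * coeff 0
            (pderiv (⟨r - 2, hh2⟩ : Fin (r - 1))
              (pderiv (⟨r - 2, hh2⟩ : Fin (r - 1))
                (pderiv (⟨1, hh1⟩ : Fin (r - 1))
                  (pderiv (⟨1, hh1⟩ : Fin (r - 1)) (F₁ - F₂)))))
            = rsuN ((0 : Fin (r-1) →₀ ℕ)
                + Finsupp.single (⟨r-2, hh2⟩ : Fin (r-1)) 1
                + Finsupp.single (⟨r-2, hh2⟩ : Fin (r-1)) 1
                + Finsupp.single (⟨1, hh1⟩ : Fin (r-1)) 1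
                + Finsupp.single (⟨1, hh1⟩ : Fin (r-1)) 1)
              * coeff ((0 : Fin (r-1) →₀ ℕ)
                + Finsupp.single (⟨r-2, hh2⟩ : Fin (r-1)) 1
                + Finsupp.single (⟨r-2, hh2⟩ : Fin (r-1)) 1
                + Finsupp.single (⟨1, hh1⟩ : Fin (r-1)) 1
                + Finsupp.single (⟨1, hh1⟩ : Fin (r-1)) 1) (F₁ - F₂) := by
          rw [rsu_Nstep, rsu_Nstep, rsu_Nstep, rsu_Nstep]
        have hQ : (0 : Fin (r-1) →₀ ℕ)
                + Finsupp.single (⟨r-2, hh2⟩ : Fin (r-1)) 1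
                + Finsupp.single (⟨r-2, hh2⟩ : Fin (r-1)) 1
                + Finsupp.single (⟨1, hh1⟩ : Fin (r-1)) 1
                + Finsupp.single (⟨1, hh1⟩ : Fin (r-1)) 1
            = Finsupp.single (⟨1, hh1⟩ : Fin (r-1)) 2
                + Finsupp.single (⟨r-2, hh2⟩ : Fin (r-1)) 2 := by
          have h2s : ∀ (x : Fin (r-1)), Finsupp.single x 2
              = Finsupp.single x 1 + Finsupp.single x 1 := by
            intro x; rw [← Finsupp.single_add]
          rw [h2s, h2s]
          abel
        rw [hQ, hcc, mul_zero] at hch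
        exact hch.symm
  apply MvPolynomial.ext
  intro s
  rw [MvPolynomial.coeff_zero]
  exact main (∑ j : Fin (r-1), s j) s rfl
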